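/- For every positive integer n, a finite simple graph G admits a proper n-colouring in which the neighbourhood of each colour class is an independent set if and only if G admits a homomorphism to the graph U(n) = Ω₃(K_n). -/

import Mathlib

/-- The graph `U(n) = Ω₃(K_n)`: vertices are the pairs `(u, U)` where `u` is a vertex of
`K_n` and `U` is a subset of the neighbourhood of `u` in `K_n` (i.e. a set of vertices
distinct from `u`); `(u,U)` and `(v,V)` are adjacent iff `u ∈ V`, `v ∈ U`, and every
vertex of `U` is adjacent (i.e. unequal, in `K_n`) to every vertex of `V`. -/
def Un (n : ℕ) : SimpleGraph {p : Fin n × Set (Fin n) // ∀ v ∈ p.2, v ≠ p.1} where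
  Adj p q := p.1.1 ∈ q.1.2 ∧ q.1.1 ∈ p.1.2 ∧ ∀ a ∈ p.1.2, ∀ b ∈ q.1.2, a ≠ b
  symm := ⟨fun p q h => ⟨h.2.1, h.1, fun a ha b hb => (h.2.2 b hb a ha).symm⟩⟩
  loopless := ⟨fun p h => p.2 p.1.1 h.1 rfl⟩

/-- A finite simple graph `G` admits a proper `n`-colouring in which the neighbourhood of
each colour class is an independent set iff `G` admits a homomorphism to `U(n) = Ω₃(K_n)`. -/
theorem colouring_indep_neighbourhoods_iff_hom_Un {V : Type} [Fintype V]
    (G : SimpleGraph V) (n : ℕ) (hn : 0 < n) :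
    (∃ c : V → Fin n, (∀ u v, G.Adj u v → c u ≠ c v) ∧
      (∀ i : Fin n, ∀ x y, G.Adj x y →
        (∃ x', G.Adj x x' ∧ c x' = i) → (∃ y', G.Adj y y' ∧ c y' = i) → False)) ↔
    Nonempty (G →g Un n) := by
  constructor
  · rintro ⟨c, hc, hind⟩
    refine ⟨⟨fun v => ⟨(c v, {i | ∃ w, G.Adj v w ∧ c w = i}), ?_⟩, ?_⟩⟩
    · rintro i ⟨w, hw, rfl⟩
      exact (hc v w hw).symm
    · intro u v huv
      refine ⟨⟨u, huv.symm, rfl⟩, ⟨v, huv, rfl⟩, ?_⟩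
      rintro a ⟨x', hx', rfl⟩ b ⟨y', hy', rfl⟩ hab
      exact hind (c y') u v huv ⟨x', hx', hab⟩ ⟨y', hy', rfl⟩
  · rintro ⟨f⟩
    refine ⟨fun v => (f v).1.1, ?_, ?_⟩
    · intro u v huv
      have h := f.map_adj huv
      intro he
      exact (f v).2 (f u).1.1 h.1 he
    · rintro i x y hxy ⟨x', hx', rfl⟩ ⟨y', hy', hy''⟩
      have h := f.map_adj hxy
      have h1 : (f x').1.1 ∈ (f x).1.2 := (f.map_adj hx').2.1
      have h2 : (f y').1.1 ∈ (f y).1.2 := (f.map_adj hy').2.1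
      exact h.2.2 _ h1 _ h2 hy''.symm |>.elim
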